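/- 𝓙 ∩ 𝓛 = 𝓢: a distribution F of a nonnegative unbounded random variable is subexponential if and only if it is both long-tailed and belongs to the class 𝓙. -/

import Mathlib

open MeasureTheory Filter Set

/-- Tail of a distribution: `F̄(x) = μ(x, ∞)`. -/
noncomputable def tail (μ : Measure ℝ) (x : ℝ) : ℝ := (μ (Set.Ioi x)).toReal

/-- Conditional probability `P(A | X₁ + X₂ > x)` for two i.i.d. variables with law `μ`. -/
noncomputable def condPair (μ : Measure ℝ) (A : Set (ℝ × ℝ)) (x : ℝ) : ℝ :=
  ((μ.prod μ) (A ∩ {p | x < p.1 + p.2})).toReal / ((μ.prod μ) {p | x < p.1 + p.2}).toReal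

/-- The class 𝓙 : `lim_{K→∞} liminf_{x→∞} P(max(X₁,X₂) > x − K | X₁ + X₂ > x) = 1`. -/
def MemJ (μ : Measure ℝ) : Prop :=
  Tendsto (fun K : ℝ =>
      liminf (fun x : ℝ => condPair μ {p | x - K < max p.1 p.2} x) atTop)
    atTop (nhds 1)

/-- The class 𝓙 (equivalent form): for every nonnegative, unbounded, nondecreasing `g`,
`lim_{x→∞} P(min(X₁,X₂) > g(x) | X₁ + X₂ > x) = 0`. -/
def MemJg (μ : Measure ℝ) : Prop :=
  ∀ g : ℝ → ℝ, (∀ x, 0 ≤ g x) → Monotone g → (∀ M, ∃ x, M < g x) →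
    Tendsto (fun x : ℝ => condPair μ {p | g x < min p.1 p.2} x) atTop (nhds 0)

/-- Tail of the two-fold convolution: `F̄²*(x) = P(X₁ + X₂ > x)`. -/
noncomputable def tail2 (μ : Measure ℝ) (x : ℝ) : ℝ := ((μ.prod μ) {p | x < p.1 + p.2}).toReal

/-- Weak asymptotic tail-equivalence `F̄ ≍ Ḡ`:
`0 < liminf F̄(x)/Ḡ(x) ≤ limsup F̄(x)/Ḡ(x) < ∞`. -/
def WeakTailEquiv (μ ν : Measure ℝ) : Prop :=
  (∃ c : ℝ, 0 < c ∧ ∀ᶠ x in atTop, c * tail ν x ≤ tail μ x) ∧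
  (∃ C : ℝ, ∀ᶠ x in atTop, tail μ x ≤ C * tail ν x)

/-- Convolution of two laws on ℝ. -/
noncomputable def conv (μ ν : Measure ℝ) : Measure ℝ :=
  Measure.map (fun p : ℝ × ℝ => p.1 + p.2) (μ.prod ν)

/-- `n`-fold convolution `F^{n*}`. -/
noncomputable def nconv (μ : Measure ℝ) : ℕ → Measure ℝ
  | 0 => Measure.dirac 0
  | n + 1 => conv (nconv μ n) μ

/-- Long-tailed: `lim_{x→∞} F̄(x+y)/F̄(x) = 1` for all `y`. -/
def LongTailed (μ : Measure ℝ) : Prop :=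
  ∀ y : ℝ, Tendsto (fun x : ℝ => tail μ (x + y) / tail μ x) atTop (nhds 1)

/-- Subexponential: `lim_{x→∞} F̄²*(x)/F̄(x) = 2`. -/
def Subexponential (μ : Measure ℝ) : Prop :=
  Tendsto (fun x : ℝ => tail2 μ x / tail μ x) atTop (nhds 2)

set_option linter.unusedSectionVars false
set_option linter.unusedVariables false


section Basics
variable (μ : Measure ℝ) [IsProbabilityMeasure μ]

lemma tail_nonneg (x : ℝ) : 0 ≤ tail μ x := ENNReal.toReal_nonneg

lemma tail_le_one (x : ℝ) : tail μ x ≤ 1 := by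
  have := prob_le_one (μ := μ) (s := Set.Ioi x)
  simpa [tail] using ENNReal.toReal_le_toReal (measure_ne_top μ _) (by simp) |>.mpr this

lemma tail_anti : Antitone (tail μ) := by
  intro a b hab
  exact ENNReal.toReal_mono (measure_ne_top μ _) (measure_mono (Set.Ioi_subset_Ioi hab))

lemma tail_pos (hub : ∀ x : ℝ, 0 < μ (Set.Ioi x)) (x : ℝ) : 0 < tail μ x :=
  ENNReal.toReal_pos (hub x).ne' (measure_ne_top μ _)

lemma add_Iic_Ioi (x : ℝ) : (μ (Set.Iic x)).toReal + tail μ x = 1 := by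
  have h : μ (Set.Iic x) + μ (Set.Ioi x) = 1 := by
    rw [← measure_union (by simp [Set.disjoint_left]) measurableSet_Ioi]
    simp [Set.Iic_union_Ioi]
  have := congrArg ENNReal.toReal h
  rwa [ENNReal.toReal_add (measure_ne_top μ _) (measure_ne_top μ _), ENNReal.toReal_one] at this

lemma tail_tendsto_zero : Tendsto (tail μ) atTop (nhds 0) := by
  have h1 : Tendsto (fun x => μ (Set.Iic x)) atTop (nhds (μ Set.univ)) :=
    tendsto_measure_Iic_atTop μ
  have h2 : Tendsto (fun x => (μ (Set.Iic x)).toReal) atTop (nhds 1) := by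
    have := (ENNReal.tendsto_toReal (a := μ Set.univ) (by simp)).comp h1
    simpa [Function.comp_def] using this
  have h3 : Tendsto (fun x => 1 - (μ (Set.Iic x)).toReal) atTop (nhds (1 - 1)) :=
    (tendsto_const_nhds.sub h2)
  simp only [sub_self] at h3
  refine h3.congr (fun x => ?_)
  have := add_Iic_Ioi μ x
  linarith
end Basics

set_option linter.unusedSectionVars false

lemma measurableSet_sumSet (x : ℝ) : MeasurableSet {p : ℝ × ℝ | x < p.1 + p.2} :=
  measurableSet_lt measurable_const (measurable_fst.add measurable_snd)

section Slice
variable (μ : Measure ℝ) [IsProbabilityMeasure μ]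

lemma prod_sum_eq (x : ℝ) :
    (μ.prod μ) {p : ℝ × ℝ | x < p.1 + p.2} = ∫⁻ t, μ (Set.Ioi (x - t)) ∂μ := by
  rw [Measure.prod_apply (measurableSet_sumSet x)]
  congr 1
  ext t
  congr 1
  ext s
  simp [Set.mem_Ioi]
  constructor <;> intro h <;> linarith

lemma measure_Ici_zero (hnn : μ (Set.Iio 0) = 0) : μ (Set.Ici 0) = 1 := by
  have : μ (Set.Iio 0) + μ (Set.Ici 0) = 1 := by
    rw [← measure_union (by simp [Set.disjoint_left]) measurableSet_Ici]
    simp [Set.Iio_union_Ici]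
  simpa [hnn] using this

lemma measure_Ioi_neg (hnn : μ (Set.Iio 0) = 0) {c : ℝ} (hc : c < 0) : μ (Set.Ioi c) = 1 := by
  refine le_antisymm (prob_le_one) ?_
  rw [← measure_Ici_zero μ hnn]
  exact measure_mono (fun t ht => lt_of_lt_of_le hc ht)
end Slice

section Bounds
variable (μ : Measure ℝ) [IsProbabilityMeasure μ]

lemma tail2_nonneg (x : ℝ) : 0 ≤ tail2 μ x := ENNReal.toReal_nonneg

lemma prod_sum_ne_top (x : ℝ) : (μ.prod μ) {p : ℝ × ℝ | x < p.1 + p.2} ≠ ⊤ :=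
  measure_ne_top _ _

lemma tail2_le_one (x : ℝ) : tail2 μ x ≤ 1 := by
  have := prob_le_one (μ := μ.prod μ) (s := {p : ℝ × ℝ | x < p.1 + p.2})
  simpa [tail2] using ENNReal.toReal_le_toReal (measure_ne_top _ _) (by simp) |>.mpr this

lemma tail_le_tail2 (hnn : μ (Set.Iio 0) = 0) (x : ℝ) : tail μ x ≤ tail2 μ x := by
  refine ENNReal.toReal_mono (measure_ne_top _ _) ?_
  calc μ (Set.Ioi x) = μ (Set.Ioi x) * μ (Set.Ici 0) := by rw [measure_Ici_zero μ hnn, mul_one]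
    _ = (μ.prod μ) (Set.Ioi x ×ˢ Set.Ici 0) := (Measure.prod_prod _ _).symm
    _ ≤ (μ.prod μ) {p : ℝ × ℝ | x < p.1 + p.2} := by
        refine measure_mono ?_
        rintro ⟨a, b⟩ ⟨ha, hb⟩
        simp only [Set.mem_Ioi] at ha
        simp only [Set.mem_Ici] at hb
        simp only [Set.mem_setOf_eq]
        linarith

lemma tail2_pos (hnn : μ (Set.Iio 0) = 0) (hub : ∀ x : ℝ, 0 < μ (Set.Ioi x)) (x : ℝ) :
    0 < tail2 μ x := lt_of_lt_of_le (tail_pos μ hub x) (tail_le_tail2 μ hnn x)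

lemma two_tail_le (hnn : μ (Set.Iio 0) = 0) (x : ℝ) :
    2 * tail μ x ≤ tail2 μ x + tail μ x ^ 2 := by
  set U := Set.Ioi x ×ˢ Set.Ici (0:ℝ)
  set V := Set.Ici (0:ℝ) ×ˢ Set.Ioi x
  have hV : MeasurableSet V := measurableSet_Ici.prod measurableSet_Ioi
  have key : (μ.prod μ) U + (μ.prod μ) V =
      (μ.prod μ) (U ∪ V) + (μ.prod μ) (U ∩ V) := (measure_union_add_inter U hV).symm
  have hU : (μ.prod μ) U = μ (Set.Ioi x) := by
    rw [Measure.prod_prod, measure_Ici_zero μ hnn, mul_one]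
  have hV' : (μ.prod μ) V = μ (Set.Ioi x) := by
    rw [Measure.prod_prod, measure_Ici_zero μ hnn, one_mul]
  have hUV : (μ.prod μ) (U ∪ V) ≤ (μ.prod μ) {p : ℝ × ℝ | x < p.1 + p.2} := by
    refine measure_mono ?_
    rintro ⟨a, b⟩ (⟨ha, hb⟩ | ⟨ha, hb⟩) <;>
      simp only [Set.mem_Ioi, Set.mem_Ici] at ha hb <;> simp only [Set.mem_setOf_eq] <;> linarith
  have hI : (μ.prod μ) (U ∩ V) ≤ μ (Set.Ioi x) * μ (Set.Ioi x) := by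
    rw [← Measure.prod_prod]
    exact measure_mono (fun p hp => ⟨hp.1.1, hp.2.2⟩)
  have : μ (Set.Ioi x) + μ (Set.Ioi x) ≤
      (μ.prod μ) {p : ℝ × ℝ | x < p.1 + p.2} + μ (Set.Ioi x) * μ (Set.Ioi x) := by
    calc μ (Set.Ioi x) + μ (Set.Ioi x) = (μ.prod μ) U + (μ.prod μ) V := by rw [hU, hV']
      _ = (μ.prod μ) (U ∪ V) + (μ.prod μ) (U ∩ V) := key
      _ ≤ _ := add_le_add hUV hI
  have ht := ENNReal.toReal_mono ?_ this
  · rw [ENNReal.toReal_add (measure_ne_top _ _) (measure_ne_top _ _),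
      ENNReal.toReal_add (measure_ne_top _ _) ?_, ENNReal.toReal_mul] at ht
    · simp only [tail, tail2]; nlinarith [ht]
    · exact ENNReal.mul_ne_top (measure_ne_top _ _) (measure_ne_top _ _)
  · exact ENNReal.add_ne_top.mpr ⟨measure_ne_top _ _,
      ENNReal.mul_ne_top (measure_ne_top _ _) (measure_ne_top _ _)⟩
end Bounds

section Lower
variable (μ : Measure ℝ) [IsProbabilityMeasure μ]

lemma measure_Iio_eq_Ico (hnn : μ (Set.Iio 0) = 0) (y : ℝ) :
    μ (Set.Iio y) = μ (Set.Ico 0 y) := by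
  refine le_antisymm ?_ (measure_mono Set.Ico_subset_Iio_self)
  calc μ (Set.Iio y) ≤ μ (Set.Ico 0 y ∪ Set.Iio 0) := by
        refine measure_mono (fun t ht => ?_)
        rcases lt_or_ge t 0 with h | h
        · exact Or.inr h
        · exact Or.inl ⟨h, ht⟩
    _ ≤ μ (Set.Ico 0 y) + μ (Set.Iio 0) := measure_union_le _ _
    _ = μ (Set.Ico 0 y) := by rw [hnn, add_zero]

lemma conv_lower (hnn : μ (Set.Iio 0) = 0) {y x₀ x : ℝ} (hy : 0 ≤ y) (hyx : y ≤ x₀)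
    (hx : x₀ < x) :
    tail μ x * (μ (Set.Iio y)).toReal + tail μ (x - y) * (μ (Set.Icc y x₀)).toReal + tail μ x
      ≤ tail2 μ x := by
  have key : μ (Set.Ioi x) * μ (Set.Ico 0 y) + μ (Set.Ioi (x - y)) * μ (Set.Icc y x₀)
      + 1 * μ (Set.Ioi x) ≤ (μ.prod μ) {p : ℝ × ℝ | x < p.1 + p.2} := by
    rw [prod_sum_eq μ x]
    set f : ℝ → ENNReal := fun t => μ (Set.Ioi (x - t)) with hf
    have hAB : Disjoint (Set.Ico 0 y) (Set.Icc y x₀) := by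
      rw [Set.disjoint_left]; rintro t ⟨_, h2⟩ ⟨h3, _⟩; exact absurd h3 (not_le.mpr h2)
    have hABC : Disjoint (Set.Ico 0 y ∪ Set.Icc y x₀) (Set.Ioi x) := by
      rw [Set.disjoint_left]; rintro t (⟨_, h2⟩ | ⟨_, h2⟩) h3 <;> simp only [Set.mem_Ioi] at h3 <;>
        linarith
    have h1 : μ (Set.Ioi x) * μ (Set.Ico 0 y) ≤ ∫⁻ t in Set.Ico 0 y, f t ∂μ := by
      rw [← setLIntegral_const]
      refine setLIntegral_mono' measurableSet_Ico (fun t ht => ?_)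
      exact measure_mono (Set.Ioi_subset_Ioi (by linarith [ht.1]))
    have h2 : μ (Set.Ioi (x - y)) * μ (Set.Icc y x₀) ≤ ∫⁻ t in Set.Icc y x₀, f t ∂μ := by
      rw [← setLIntegral_const]
      refine setLIntegral_mono' measurableSet_Icc (fun t ht => ?_)
      exact measure_mono (Set.Ioi_subset_Ioi (by linarith [ht.1]))
    have h3 : 1 * μ (Set.Ioi x) ≤ ∫⁻ t in Set.Ioi x, f t ∂μ := by
      rw [← setLIntegral_const]
      refine setLIntegral_mono' measurableSet_Ioi (fun t ht => ?_)
      simp only [Set.mem_Ioi] at ht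
      rw [hf]
      exact le_trans (le_of_eq (measure_Ioi_neg μ hnn (by linarith)).symm) le_rfl
    calc μ (Set.Ioi x) * μ (Set.Ico 0 y) + μ (Set.Ioi (x - y)) * μ (Set.Icc y x₀)
          + 1 * μ (Set.Ioi x)
        ≤ (∫⁻ t in Set.Ico 0 y, f t ∂μ) + (∫⁻ t in Set.Icc y x₀, f t ∂μ)
          + ∫⁻ t in Set.Ioi x, f t ∂μ := add_le_add (add_le_add h1 h2) h3
      _ = ∫⁻ t in (Set.Ico 0 y ∪ Set.Icc y x₀) ∪ Set.Ioi x, f t ∂μ := by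
          rw [lintegral_union measurableSet_Ioi hABC, lintegral_union measurableSet_Icc hAB]
      _ ≤ ∫⁻ t, f t ∂μ := setLIntegral_le_lintegral _ _
  have ht := ENNReal.toReal_mono (prod_sum_ne_top μ x) key
  rw [ENNReal.toReal_add, ENNReal.toReal_add, ENNReal.toReal_mul, ENNReal.toReal_mul,
    ENNReal.toReal_mul] at ht
  · rw [measure_Iio_eq_Ico μ hnn]
    simp only [ENNReal.toReal_one, one_mul] at ht
    exact le_trans (le_of_eq rfl) ht
  all_goals
    first
      | exact ENNReal.mul_ne_top (measure_ne_top _ _) (measure_ne_top _ _)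
      | exact ENNReal.mul_ne_top (by simp) (measure_ne_top _ _)
      | exact ENNReal.add_ne_top.mpr ⟨ENNReal.mul_ne_top (measure_ne_top _ _) (measure_ne_top _ _),
          ENNReal.mul_ne_top (measure_ne_top _ _) (measure_ne_top _ _)⟩
end Lower

section CondPair
variable (μ : Measure ℝ) [IsProbabilityMeasure μ]

lemma condPair_nonneg (A : Set (ℝ × ℝ)) (x : ℝ) : 0 ≤ condPair μ A x :=
  div_nonneg ENNReal.toReal_nonneg ENNReal.toReal_nonneg

lemma condPair_le_one (A : Set (ℝ × ℝ)) (x : ℝ) : condPair μ A x ≤ 1 := by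
  refine div_le_one_of_le₀ ?_ ENNReal.toReal_nonneg
  exact ENNReal.toReal_mono (measure_ne_top _ _) (measure_mono Set.inter_subset_right)

lemma measure_Iic_eq_Icc (hnn : μ (Set.Iio 0) = 0) (K : ℝ) :
    μ (Set.Iic K) = μ (Set.Icc 0 K) := by
  refine le_antisymm ?_ (measure_mono Set.Icc_subset_Iic_self)
  calc μ (Set.Iic K) ≤ μ (Set.Icc 0 K ∪ Set.Iio 0) := by
        refine measure_mono (fun t ht => ?_)
        rcases lt_or_ge t 0 with h | h
        · exact Or.inr h
        · exact Or.inl ⟨h, ht⟩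
    _ ≤ μ (Set.Icc 0 K) + μ (Set.Iio 0) := measure_union_le _ _
    _ = μ (Set.Icc 0 K) := by rw [hnn, add_zero]

lemma N_lower (hnn : μ (Set.Iio 0) = 0) {K x : ℝ} (hK : 0 ≤ K) (hx : K < x) :
    2 * ((μ (Set.Iic K)).toReal * tail μ x)
      ≤ ((μ.prod μ) ({p : ℝ × ℝ | x - K < max p.1 p.2} ∩ {p | x < p.1 + p.2})).toReal := by
  set U := Set.Icc (0:ℝ) K ×ˢ Set.Ioi x
  set V := Set.Ioi x ×ˢ Set.Icc (0:ℝ) K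
  have hdisj : Disjoint U V := by
    rw [Set.disjoint_left]
    rintro ⟨a, b⟩ ⟨⟨_, h2⟩, _⟩ ⟨h3, _⟩
    simp only [Set.mem_Ioi] at h3
    exact absurd h3 (not_lt.mpr (le_of_lt (lt_of_le_of_lt h2 hx)))
  have hsub : U ∪ V ⊆ {p : ℝ × ℝ | x - K < max p.1 p.2} ∩ {p | x < p.1 + p.2} := by
    rintro ⟨a, b⟩ (⟨⟨h0, h1⟩, h2⟩ | ⟨h1, ⟨h0, h2⟩⟩) <;>
        simp only [Set.mem_Ioi, Set.mem_setOf_eq, Set.mem_inter_iff, lt_max_iff] at *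
    · exact ⟨Or.inr (by linarith), by linarith⟩
    · exact ⟨Or.inl (by linarith), by linarith⟩
  have key : μ (Set.Icc 0 K) * μ (Set.Ioi x) + μ (Set.Ioi x) * μ (Set.Icc 0 K)
      ≤ (μ.prod μ) ({p : ℝ × ℝ | x - K < max p.1 p.2} ∩ {p | x < p.1 + p.2}) := by
    rw [← Measure.prod_prod, ← Measure.prod_prod]
    rw [← measure_union hdisj (measurableSet_Ioi.prod measurableSet_Icc)]
    exact measure_mono hsub
  have ht := ENNReal.toReal_mono (measure_ne_top _ _) key
  rw [ENNReal.toReal_add, ENNReal.toReal_mul, ENNReal.toReal_mul] at ht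
  · rw [measure_Iic_eq_Icc μ hnn]
    simp only [tail]
    nlinarith [ht]
  all_goals exact ENNReal.mul_ne_top (measure_ne_top _ _) (measure_ne_top _ _)

lemma N_upper (K x : ℝ) :
    ((μ.prod μ) ({p : ℝ × ℝ | x - K < max p.1 p.2} ∩ {p | x < p.1 + p.2})).toReal
      ≤ 2 * tail μ (x - K) := by
  have key : (μ.prod μ) ({p : ℝ × ℝ | x - K < max p.1 p.2} ∩ {p | x < p.1 + p.2})
      ≤ μ (Set.Ioi (x - K)) + μ (Set.Ioi (x - K)) := by
    calc (μ.prod μ) ({p : ℝ × ℝ | x - K < max p.1 p.2} ∩ {p | x < p.1 + p.2})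
        ≤ (μ.prod μ) ((Set.Ioi (x - K) ×ˢ Set.univ) ∪ (Set.univ ×ˢ Set.Ioi (x - K))) := by
          refine measure_mono ?_
          rintro ⟨a, b⟩ ⟨h1, _⟩
          simp only [Set.mem_setOf_eq, lt_max_iff] at h1
          rcases h1 with h | h
          · exact Or.inl ⟨h, Set.mem_univ _⟩
          · exact Or.inr ⟨Set.mem_univ _, h⟩
      _ ≤ (μ.prod μ) (Set.Ioi (x - K) ×ˢ Set.univ) + (μ.prod μ) (Set.univ ×ˢ Set.Ioi (x - K)) :=
          measure_union_le _ _
      _ = μ (Set.Ioi (x - K)) + μ (Set.Ioi (x - K)) := by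
          rw [Measure.prod_prod, Measure.prod_prod]
          simp
  have ht := ENNReal.toReal_mono (by simp [ENNReal.add_ne_top, measure_ne_top]) key
  rw [ENNReal.toReal_add (measure_ne_top _ _) (measure_ne_top _ _)] at ht
  simp only [tail]
  linarith
end CondPair

section Main
variable (μ : Measure ℝ) [IsProbabilityMeasure μ]

lemma add_Iio_Ici (y : ℝ) : (μ (Set.Iio y)).toReal + (μ (Set.Ici y)).toReal = 1 := by
  have h : μ (Set.Iio y) + μ (Set.Ici y) = 1 := by
    rw [← measure_union (by rw [Set.disjoint_left]; intro t h1 h2; simp only [Set.mem_Iio] at h1; simp only [Set.mem_Ici] at h2; linarith) measurableSet_Ici]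
    simp [Set.Iio_union_Ici]
  have := congrArg ENNReal.toReal h
  rwa [ENNReal.toReal_add (measure_ne_top μ _) (measure_ne_top μ _), ENNReal.toReal_one] at this

lemma ratio_sub_tendsto (hnn : μ (Set.Iio 0) = 0) (hub : ∀ x : ℝ, 0 < μ (Set.Ioi x))
    (hS : Subexponential μ) {y : ℝ} (hy : 0 ≤ y) :
    Tendsto (fun x : ℝ => tail μ (x - y) / tail μ x) atTop (nhds 1) := by
  rw [Metric.tendsto_nhds]
  intro ε hε
  set ε' := min ε 1 with hε'def
  have hε' : 0 < ε' := lt_min hε one_pos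
  have hε'1 : ε' ≤ 1 := min_le_right _ _
  set b := (μ (Set.Ici y)).toReal with hbdef
  have hb : 0 < b := by
    refine ENNReal.toReal_pos ?_ (measure_ne_top _ _)
    exact (lt_of_lt_of_le (hub y) (measure_mono Set.Ioi_subset_Ici_self)).ne'
  set δ := b * ε' / 8 with hδdef
  have hδ : 0 < δ := by positivity
  have hδb : δ ≤ b / 8 := by
    rw [hδdef]
    nlinarith
  -- choose x₀
  obtain ⟨x₀, hx₀y, hx₀tail⟩ : ∃ x₀, y ≤ x₀ ∧ tail μ x₀ < δ := by
    have := (tail_tendsto_zero μ).eventually (eventually_lt_nhds hδ)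
    obtain ⟨x₁, hx₁⟩ := (this.and (eventually_ge_atTop y)).exists
    exact ⟨x₁, hx₁.2, hx₁.1⟩
  set m := (μ (Set.Icc y x₀)).toReal with hmdef
  have hm : b - δ ≤ m := by
    have hsub : Set.Ici y ⊆ Set.Icc y x₀ ∪ Set.Ioi x₀ := by
      intro t ht
      rcases le_or_gt t x₀ with h | h
      · exact Or.inl ⟨ht, h⟩
      · exact Or.inr h
    have := measure_mono (μ := μ) hsub
    have h2 := le_trans this (measure_union_le _ _)
    have h3 := ENNReal.toReal_mono (ENNReal.add_ne_top.mpr ⟨measure_ne_top _ _, measure_ne_top _ _⟩) h2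
    rw [ENNReal.toReal_add (measure_ne_top _ _) (measure_ne_top _ _)] at h3
    have : (μ (Set.Ioi x₀)).toReal < δ := hx₀tail
    simp only [← hbdef, ← hmdef] at h3
    linarith
  have hmpos : 0 < m := by linarith
  -- eventual bound
  have hSd : ∀ᶠ x in atTop, tail2 μ x / tail μ x < 2 + δ := by
    have := hS.eventually (eventually_lt_nhds (show (2:ℝ) < 2 + δ by linarith))
    exact this
  filter_upwards [hSd, eventually_gt_atTop x₀] with x hx1 hx2
  have htp : 0 < tail μ x := tail_pos μ hub x
  have hkey := conv_lower μ hnn hy hx₀y hx2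
  set a := (μ (Set.Iio y)).toReal with hadef
  have hab : a + b = 1 := add_Iio_Ici μ y
  have ht2 : tail2 μ x < (2 + δ) * tail μ x := by
    rw [div_lt_iff₀ htp] at hx1
    exact hx1
  have hmain : tail μ (x - y) * m ≤ (b + δ) * tail μ x := by
    simp only [← hadef, ← hmdef] at hkey
    nlinarith
  have hg1 : 1 ≤ tail μ (x - y) / tail μ x := by
    rw [le_div_iff₀ htp, one_mul]
    exact tail_anti μ (by linarith)
  have hg2 : tail μ (x - y) / tail μ x ≤ (b + δ) / m := by
    rw [div_le_div_iff₀ htp hmpos]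
    nlinarith
  have hg3 : (b + δ) / m ≤ 1 + ε' / 2 := by
    rw [div_le_iff₀ hmpos]
    nlinarith
  have hε'ε : ε' ≤ ε := min_le_left _ _
  rw [Real.dist_eq, abs_lt]
  constructor <;> nlinarith
end Main

section Main2
variable (μ : Measure ℝ) [IsProbabilityMeasure μ]

lemma subexp_longTailed (hnn : μ (Set.Iio 0) = 0) (hub : ∀ x : ℝ, 0 < μ (Set.Ioi x))
    (hS : Subexponential μ) : LongTailed μ := by
  intro y
  rcases le_or_gt y 0 with h | h
  · have h1 := ratio_sub_tendsto μ hnn hub hS (neg_nonneg.mpr h)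
    exact h1.congr (fun x => by rw [sub_neg_eq_add])
  · have h1 := ratio_sub_tendsto μ hnn hub hS h.le
    have h2 : Tendsto (fun x : ℝ => tail μ x / tail μ (x + y)) atTop (nhds 1) := by
      have := h1.comp (tendsto_atTop_add_const_right atTop y tendsto_id)
      exact this.congr (fun x => by simp [Function.comp])
    have h3 := h2.inv₀ one_ne_zero
    simp only [inv_one] at h3
    exact h3.congr (fun x => by rw [inv_div])

lemma subexp_memJ (hnn : μ (Set.Iio 0) = 0) (hub : ∀ x : ℝ, 0 < μ (Set.Ioi x))
    (hS : Subexponential μ) : MemJ μ := by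
  have hhalf : Tendsto (fun x : ℝ => tail μ x / tail2 μ x) atTop (nhds 2⁻¹) := by
    have := hS.inv₀ two_ne_zero
    exact this.congr (fun x => by rw [inv_div])
  unfold MemJ
  refine tendsto_of_tendsto_of_tendsto_of_le_of_le'
    (g := fun K : ℝ => 1 - tail μ K) (h := fun _ : ℝ => (1:ℝ)) ?_ tendsto_const_nhds ?_ ?_
  · have := (tail_tendsto_zero μ).const_sub 1
    simpa using this
  · -- lower bound on liminf
    filter_upwards [eventually_ge_atTop (0:ℝ)] with K hK
    set cK := (μ (Set.Iic K)).toReal with hcK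
    have hc1 : 1 - tail μ K = cK := by have := add_Iic_Ioi μ K; linarith
    rw [hc1]
    -- show cK ≤ liminf
    refine le_of_forall_pos_le_add (fun ε hε => ?_)
    have hev : ∀ᶠ x in atTop, cK - ε ≤ condPair μ {p : ℝ × ℝ | x - K < max p.1 p.2} x := by
      have hev2 : ∀ᶠ x in atTop, 2⁻¹ - ε / 2 < tail μ x / tail2 μ x := by
        rcases le_or_gt (2⁻¹ - ε/2) 0 with hc | hc
        · filter_upwards with x
          exact lt_of_le_of_lt hc (div_pos (tail_pos μ hub x) (tail2_pos μ hnn hub x))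
        · exact hhalf.eventually (eventually_gt_nhds (by linarith))
      filter_upwards [hev2, eventually_gt_atTop K] with x hx1 hx2
      have ht2p : 0 < tail2 μ x := tail2_pos μ hnn hub x
      have hN := N_lower μ hnn hK hx2
      have step : 2 * (cK * tail μ x) / tail2 μ x
          ≤ condPair μ {p : ℝ × ℝ | x - K < max p.1 p.2} x := by
        unfold condPair
        have ht2p' : (0:ℝ) < ((μ.prod μ) {p : ℝ × ℝ | x < p.1 + p.2}).toReal := ht2p
        exact (div_le_div_iff_of_pos_right ht2p').mpr hN
      refine le_trans ?_ step
      have hcK0 : 0 ≤ cK := ENNReal.toReal_nonneg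
      have hcK1 : cK ≤ 1 := by
        have := tail_nonneg μ K; linarith
      have : 2 * (cK * tail μ x) / tail2 μ x = 2 * cK * (tail μ x / tail2 μ x) := by ring
      rw [this]
      nlinarith [hx1.le, div_nonneg (tail_nonneg μ x) (tail2_nonneg μ x)]
    have := le_liminf_of_le (isCoboundedUnder_ge_of_le atTop
      (fun x => condPair_le_one μ _ x)) hev
    linarith
  · -- upper bound on liminf
    filter_upwards with K
    refine liminf_le_of_frequently_le (Frequently.of_forall (fun x => condPair_le_one μ _ x)) ?_
    exact ⟨0, Filter.eventually_map.mpr (Eventually.of_forall (fun x => condPair_nonneg μ _ x))⟩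
end Main2

section Main3
variable (μ : Measure ℝ) [IsProbabilityMeasure μ]

lemma memJ_longTailed_subexp (hnn : μ (Set.Iio 0) = 0) (hub : ∀ x : ℝ, 0 < μ (Set.Ioi x))
    (hJ : MemJ μ) (hL : LongTailed μ) : Subexponential μ := by
  rw [Subexponential, Metric.tendsto_nhds]
  intro ε hε
  set δ := min (ε / 16) (1 / 2) with hδdef
  have hδ : 0 < δ := lt_min (by linarith) (by norm_num)
  have hδ2 : δ ≤ 1 / 2 := min_le_right _ _
  have hδε : δ ≤ ε / 16 := min_le_left _ _
  -- pick K from MemJ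
  obtain ⟨K, hK⟩ : ∃ K : ℝ, 1 - δ <
      liminf (fun x : ℝ => condPair μ {p : ℝ × ℝ | x - K < max p.1 p.2} x) atTop := by
    have := hJ.eventually (eventually_gt_nhds (show 1 - δ < 1 by linarith))
    exact this.exists
  have hevJ : ∀ᶠ x in atTop,
      1 - δ < condPair μ {p : ℝ × ℝ | x - K < max p.1 p.2} x :=
    eventually_lt_of_lt_liminf hK
      ⟨0, Filter.eventually_map.mpr (Eventually.of_forall (fun x => condPair_nonneg μ _ x))⟩
  -- long-tailed at -K
  have hLK : ∀ᶠ x in atTop, tail μ (x - K) / tail μ x < 1 + δ := by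
    have h1 := (hL (-K)).eventually (eventually_lt_nhds (show (1:ℝ) < 1 + δ by linarith))
    exact h1.mono (fun x hx => by rw [← sub_eq_add_neg] at hx; exact hx)
  have hsmall : ∀ᶠ x in atTop, tail μ x < ε / 2 :=
    (tail_tendsto_zero μ).eventually (eventually_lt_nhds (by linarith))
  filter_upwards [hevJ, hLK, hsmall] with x hx1 hx2 hx3
  have htp : 0 < tail μ x := tail_pos μ hub x
  have ht2p : 0 < tail2 μ x := tail2_pos μ hnn hub x
  -- lower bound
  have hlow : 2 - tail μ x ≤ tail2 μ x / tail μ x := by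
    have h := two_tail_le μ hnn x
    rw [le_div_iff₀ htp]
    nlinarith
  -- upper bound
  have hupper : tail2 μ x / tail μ x < 2 + ε / 2 := by
    have hNu := N_upper μ K x
    have hcond : (1 - δ) * tail2 μ x <
        ((μ.prod μ) ({p : ℝ × ℝ | x - K < max p.1 p.2} ∩ {p | x < p.1 + p.2})).toReal := by
      have := hx1
      unfold condPair at this
      have ht2p' : (0:ℝ) < ((μ.prod μ) {p : ℝ × ℝ | x < p.1 + p.2}).toReal := ht2p
      rw [lt_div_iff₀ ht2p'] at this
      calc (1 - δ) * tail2 μ x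
          = (1 - δ) * ((μ.prod μ) {p : ℝ × ℝ | x < p.1 + p.2}).toReal := rfl
        _ < _ := this
    have h1 : (1 - δ) * tail2 μ x < 2 * tail μ (x - K) := lt_of_lt_of_le hcond hNu
    have h2 : tail μ (x - K) < (1 + δ) * tail μ x := by
      rw [div_lt_iff₀ htp] at hx2
      linarith
    have h3 : (1 - δ) * tail2 μ x < 2 * (1 + δ) * tail μ x := by nlinarith
    rw [div_lt_iff₀ htp]
    have h1δ : (0:ℝ) < 1 - δ := by linarith
    have e2 : ε * δ ≤ ε / 2 := by nlinarith
    have key : 2 * (1 + δ) ≤ (2 + ε / 2) * (1 - δ) := by nlinarith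
    by_contra hcon
    push_neg at hcon
    have : (1 - δ) * ((2 + ε / 2) * tail μ x) ≤ (1 - δ) * tail2 μ x :=
      mul_le_mul_of_nonneg_left hcon h1δ.le
    nlinarith
  rw [Real.dist_eq, abs_lt]
  constructor <;> nlinarith
end Main3


theorem stmt6 (μ : Measure ℝ) [IsProbabilityMeasure μ]
    (hnn : μ (Set.Iio 0) = 0) (hub : ∀ x : ℝ, 0 < μ (Set.Ioi x)) :
    (MemJ μ ∧ LongTailed μ) ↔ Subexponential μ := by
  constructor
  · rintro ⟨hJ, hL⟩
    exact memJ_longTailed_subexp μ hnn hub hJ hL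
  · intro hS
    exact ⟨subexp_memJ μ hnn hub hS, subexp_longTailed μ hnn hub hS⟩
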